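/- A 2-edge-coloured graph G = (Γ, R, B) is chromatically invariant if and only if G has no bichromatic 2-path and no induced bichromatic copy of 2K₂. -/

import Mathlib

open SimpleGraph Polynomial

/-- A `k`-colouring of a mixed 2-edge-coloured graph with red edge graph `R`,
blue edge graph `B`, and extra uncoloured edge graph `F`. -/
def IsMixedColouring {V : Type*} (R B F : SimpleGraph V) {k : ℕ} (c : V → Fin k) : Prop :=
  (∀ u v, (R ⊔ B ⊔ F).Adj u v → c u ≠ c v) ∧
  (∀ u x v y, R.Adj u x → B.Adj v y → c u = c v → c x ≠ c y)

/-- The number of `k`-colourings of the mixed 2-edge-coloured graph `(R, B, F)`. -/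
noncomputable def numColourings {V : Type*} (R B F : SimpleGraph V) (k : ℕ) : ℕ :=
  Nat.card {c : V → Fin k // IsMixedColouring R B F c}

/-- A bichromatic 2-path `(x, u, y)`: `xu` red, `uy` blue, `xy` not an edge of `S(M)`. -/
def IsBiPath {V : Type*} (R B F : SimpleGraph V) (x u y : V) : Prop :=
  R.Adj x u ∧ B.Adj u y ∧ ¬(R ⊔ B ⊔ F).Adj x y

/-- The number of bichromatic 2-paths. -/
noncomputable def numBiPaths {V : Type*} (R B F : SimpleGraph V) : ℕ :=
  Nat.card {p : V × V × V // IsBiPath R B F p.1 p.2.1 p.2.2}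

/-- The graph `Λ(M)`: all edges of `S(M)` plus edges joining the ends of
bichromatic 2-paths. -/
def LambdaGraph {V : Type*} (R B F : SimpleGraph V) : SimpleGraph V where
  Adj a b := a ≠ b ∧ ((R ⊔ B ⊔ F).Adj a b ∨
    ∃ w, IsBiPath R B F a w b ∨ IsBiPath R B F b w a)
  symm := by
    constructor
    rintro a b ⟨hab, h⟩
    refine ⟨hab.symm, ?_⟩
    rcases h with h | ⟨w, h⟩
    · exact Or.inl h.symm
    · exact Or.inr ⟨w, h.symm⟩
  loopless := ⟨fun a h => h.1 rfl⟩

/-- `(p.1, p.2)` is a pair of obstructing edges: `p.1` a red edge `ux`, `p.2` a blue edge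
`vy`, with the subgraph of `Λ` induced on `{u, x, v, y}` of chromatic number 2. -/
def IsObstructingPair {V : Type*} (R B F : SimpleGraph V) (p : Sym2 V × Sym2 V) : Prop :=
  ∃ u x v y : V, p.1 = s(u, x) ∧ p.2 = s(v, y) ∧ R.Adj u x ∧ B.Adj v y ∧
    (SimpleGraph.induce {u, x, v, y} (LambdaGraph R B F)).chromaticNumber = 2

/-- The number of pairs of obstructing edges. -/
noncomputable def numObstructing {V : Type*} (R B F : SimpleGraph V) : ℕ :=
  Nat.card {p : Sym2 V × Sym2 V // IsObstructingPair R B F p}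

/-- The number of 3-element vertex subsets inducing a triangle. -/
noncomputable def numTriangles {V : Type*} (G : SimpleGraph V) : ℕ :=
  Nat.card {s : Finset V // s.card = 3 ∧ ∀ a ∈ s, ∀ b ∈ s, a ≠ b → G.Adj a b}

/-- A 2-edge-coloured graph is chromatically invariant when for each `k` its number of
`k`-colourings equals the number of proper `k`-colourings of the underlying graph. -/
def ChromaticallyInvariant {V : Type*} (R B : SimpleGraph V) : Prop :=
  ∀ k : ℕ, Nat.card {c : V → Fin k // IsMixedColouring R B ⊥ c} =
    Nat.card {c : V → Fin k // ∀ u v, (R ⊔ B).Adj u v → c u ≠ c v}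

/-- A graph is a join when its vertex set has a partition into two non-empty parts with
every vertex of one part adjacent to every vertex of the other. -/
def IsJoin {W : Type*} (G : SimpleGraph W) : Prop :=
  ∃ X Y : Set W, X.Nonempty ∧ Y.Nonempty ∧ Disjoint X Y ∧ X ∪ Y = Set.univ ∧
    ∀ x ∈ X, ∀ y ∈ Y, G.Adj x y

/-- Disjoint union of two simple graphs. -/
def disjUnion {α β : Type*} (G : SimpleGraph α) (H : SimpleGraph β) :
    SimpleGraph (α ⊕ β) where
  Adj a b := match a, b with
    | Sum.inl a, Sum.inl b => G.Adj a b
    | Sum.inr a, Sum.inr b => H.Adj a b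
    | _, _ => False
  symm := ⟨by rintro (a | a) (b | b) h <;> simp_all <;> exact h.symm⟩
  loopless := ⟨by rintro (a | a) h <;> exact (SimpleGraph.irrefl _) h⟩

/-- The complete bipartite "cross" graph between the two sides of a sum type. -/
def crossGraph (α β : Type*) : SimpleGraph (α ⊕ β) where
  Adj a b := match a, b with
    | Sum.inl _, Sum.inr _ => True
    | Sum.inr _, Sum.inl _ => True
    | _, _ => False
  symm := ⟨by rintro (a | a) (b | b) h <;> trivial⟩
  loopless := ⟨by rintro (a | a) h <;> exact h⟩
/-- An induced bichromatic copy of `2K₂`: a red edge `ux` and a blue edge `vy` on four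
distinct vertices with no other edges of the underlying graph among them. -/
def HasInducedBichromatic2K2 {V : Type*} (R B : SimpleGraph V) : Prop :=
  ∃ u x v y : V, u ≠ x ∧ u ≠ v ∧ u ≠ y ∧ x ≠ v ∧ x ≠ y ∧ v ≠ y ∧
    R.Adj u x ∧ B.Adj v y ∧
    ¬(R ⊔ B).Adj u v ∧ ¬(R ⊔ B).Adj u y ∧ ¬(R ⊔ B).Adj x v ∧ ¬(R ⊔ B).Adj x y


lemma sup_bot_adj_iff {V : Type*} (R B : SimpleGraph V) (a b : V) :
    (R ⊔ B ⊔ (⊥ : SimpleGraph V)).Adj a b ↔ (R ⊔ B).Adj a b := by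
  simp

lemma aux_proper_isMixed {V : Type*} [Fintype V] {R B : SimpleGraph V}
    (hCI : ChromaticallyInvariant R B) (k : ℕ) (c : V → Fin k)
    (hc : ∀ u v, (R ⊔ B).Adj u v → c u ≠ c v) : IsMixedColouring R B ⊥ c := by
  classical
  have hsub : {c : V → Fin k | IsMixedColouring R B ⊥ c} ⊆
      {c : V → Fin k | ∀ u v, (R ⊔ B).Adj u v → c u ≠ c v} := by
    intro c hc u v h
    exact hc.1 u v ((sup_bot_adj_iff R B u v).mpr h)
  have hcard : ({c : V → Fin k | ∀ u v, (R ⊔ B).Adj u v → c u ≠ c v}).ncard ≤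
      ({c : V → Fin k | IsMixedColouring R B ⊥ c}).ncard := by
    rw [← Nat.card_coe_set_eq, ← Nat.card_coe_set_eq]
    exact (hCI k).ge
  have heq := Set.eq_of_subset_of_ncard_le hsub hcard (Set.toFinite _)
  exact (Set.ext_iff.mp heq c).mpr hc

/-- A 2-edge-coloured graph is chromatically invariant iff it has no bichromatic 2-path
and no induced bichromatic copy of `2K₂`. -/
theorem chromaticallyInvariant_iff_no_biPath_and_no_bichromatic2K2
    {V : Type*} [Fintype V] (R B : SimpleGraph V) (hRB : Disjoint R B) :
    ChromaticallyInvariant R B ↔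
      (∀ x u y : V, ¬ IsBiPath R B ⊥ x u y) ∧ ¬ HasInducedBichromatic2K2 R B := by
    classical
  constructor
  · intro hCI
    have key := aux_proper_isMixed hCI (Fintype.card V)
    have e : V ↪ Fin (Fintype.card V) := (Fintype.equivFin V).toEmbedding
    constructor
    · rintro x u y ⟨hxu, huy, hxy⟩
      rw [sup_bot_adj_iff] at hxy
      have hxny : x ≠ y := by
        rintro rfl
        have hd : (R ⊓ B).Adj u x := ⟨hxu.symm, huy⟩
        rw [disjoint_iff.mp hRB] at hd
        simpa using hd
      have hmix := key (fun w => e (if w = y then x else w)) ?_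
      · have h2 := hmix.2 u x u y hxu.symm huy rfl
        exact h2 (by simp)
      · intro a b hab hco
        have hfe : (if a = y then x else a) = (if b = y then x else b) := e.injective hco
        have hne : a ≠ b := hab.ne
        split_ifs at hfe with h1 h2 h2
        · exact hne (h1.trans h2.symm)
        · subst h1; subst hfe; exact hxy hab.symm
        · subst h2; subst hfe; exact hxy hab
        · exact hne hfe
    · rintro ⟨u, x, v, y, hux, huv, huy, hxv, hxy, hvy, hR, hB, nuv, nuy, nxv, nxy⟩
      have hmix := key (fun w => e (if w = v then u else if w = y then x else w)) ?_
      · have h2 := hmix.2 u x v y hR hB (by simp [huv, huy])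
        exact h2 (by simp [hxv, hxy, Ne.symm hvy])
      · intro a b hab hco
        have hfe : (if a = v then u else if a = y then x else a) =
            (if b = v then u else if b = y then x else b) := e.injective hco
        have hne : a ≠ b := hab.ne
        split_ifs at hfe <;> subst_vars <;>
          first
            | exact hne rfl
            | exact hux rfl
            | exact hux hfe
            | exact hux hfe.symm
            | exact hne hfe
            | exact nuv hab
            | exact nuv hab.symm
            | exact nxy hab
            | exact nxy hab.symm
  · rintro ⟨hP0, h2⟩
    have hP : ∀ a w b : V, R.Adj a w → B.Adj w b → (R ⊔ B).Adj a b := by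
      intro a w b h1 h2'
      by_contra h3
      exact hP0 a w b ⟨h1, h2', fun hh => h3 ((sup_bot_adj_iff R B a b).mp hh)⟩
    intro k
    refine Nat.card_congr (Equiv.subtypeEquivRight fun c => ?_)
    constructor
    · intro hm u v h
      exact hm.1 u v ((sup_bot_adj_iff R B u v).mpr h)
    · intro hc
      refine ⟨fun u v h => hc u v ((sup_bot_adj_iff R B u v).mp h), ?_⟩
      intro u x v y hux hvy hcuv hcxy
      have nonadj : ∀ a b : V, c a = c b → ¬(R ⊔ B).Adj a b := fun a b hcab hab => hc a b hab hcab
      rcases eq_or_ne u v with rfl | huv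
      · rcases eq_or_ne x y with rfl | hxy
        · have hd : (R ⊓ B).Adj u x := ⟨hux, hvy⟩
          rw [disjoint_iff.mp hRB] at hd
          simpa using hd
        · exact hc x y (hP x u y hux.symm hvy) hcxy
      · have nuv := nonadj u v hcuv
        rcases eq_or_ne x y with rfl | hxy
        · exact nuv (hP u x v hux hvy.symm)
        · have nxy := nonadj x y hcxy
          rcases eq_or_ne u y with rfl | huy
          · exact hc u x (Or.inl hux) hcxy.symm
          · rcases eq_or_ne x v with rfl | hxv
            · exact hc u x (Or.inl hux) hcuv
            · have nuy : ¬(R ⊔ B).Adj u y := by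
                intro huy'
                rcases huy' with h' | h'
                · exact nuv (hP u y v h' hvy.symm)
                · exact nxy (hP x u y hux.symm h')
              have nxv : ¬(R ⊔ B).Adj x v := by
                intro hxv'
                rcases hxv' with h' | h'
                · exact nxy (hP x v y h' hvy)
                · exact nuv (hP u x v hux h')
              exact h2 ⟨u, x, v, y, hux.ne, huv, huy, hxv, hxy, hvy.ne, hux, hvy,
                nuv, nuy, nxv, nxy⟩
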